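/- Let (X,𝒜,ν) be a measure space, p ≥ 1, f₁,…,fₙ ∈ L^p(ν), let μ = (μ₁,…,μ_m) and λ = (λ₁,…,λ_n) be probability vectors, and let ω₁, ω₂ be two weight functions with respect to μ and λ. Then ‖∑_{j=1}^n λⱼfⱼ‖_p^p ≤ ∑_{i=1}^m μᵢ ‖L_p^p(∑_{j=1}^n ω₁(i,j)λⱼ|fⱼ|, ∑_{j=1}^n ω₂(i,j)λⱼ|fⱼ|)‖_1 ≤ ∑_{j=1}^n λⱼ‖fⱼ‖_p^p, where L_p^p(a,b) denotes the p-th power of the p-logarithmic mean applied pointwise and ‖·‖_1 is the L¹(ν)-norm. -/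

import Mathlib

open Finset MeasureTheory intervalIntegral Set

noncomputable def LpPowP (p a b : ℝ) : ℝ :=
  if a = b then a ^ p else (b ^ (p + 1) - a ^ (p + 1)) / ((p + 1) * (b - a))

lemma LpPowP_eq_integral {p a b : ℝ} (hp : 1 ≤ p) :
    LpPowP p a b = ∫ t in (0:ℝ)..1, ((1-t)*a + t*b) ^ p := by
  have h0p : (0:ℝ) < p := by linarith
  rcases eq_or_ne a b with h | h
  · subst h
    simp only [LpPowP, if_pos rfl]
    have : ∀ t : ℝ, ((1-t)*a + t*a) ^ p = a ^ p := by intro t; ring_nf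
    rw [intervalIntegral.integral_congr (fun t _ => this t)]
    simp
  · rw [LpPowP, if_neg h]
    have hc : b - a ≠ 0 := sub_ne_zero.mpr (Ne.symm h)
    have h1 : ∀ t : ℝ, (1-t)*a + t*b = (b-a)*t + a := by intro t; ring
    have hp1 : p + 1 ≠ 0 := by positivity
    symm
    calc ∫ t in (0:ℝ)..1, ((1-t)*a + t*b) ^ p
        = ∫ t in (0:ℝ)..1, ((b-a)*t + a) ^ p := by
          exact intervalIntegral.integral_congr (fun t _ => by rw [h1 t])
      _ = (b-a)⁻¹ • ∫ u in ((b-a)*0 + a)..((b-a)*1 + a), u ^ p :=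
          intervalIntegral.integral_comp_mul_add (fun u => u ^ p) hc a
      _ = (b ^ (p + 1) - a ^ (p + 1)) / ((p + 1) * (b - a)) := by
          rw [mul_zero, mul_one, zero_add, sub_add_cancel,
            integral_rpow (Or.inl (by linarith : (-1:ℝ) < p))]
          rw [smul_eq_mul, inv_mul_eq_div, div_div]

lemma cont_g (p a b : ℝ) (hp : 1 ≤ p) :
    Continuous (fun t : ℝ => ((1-t)*a + t*b) ^ p) :=
  (by continuity : Continuous fun t : ℝ => (1-t)*a + t*b).rpow_const
    (fun _ => Or.inr (by linarith))

lemma base_nonneg {a b t : ℝ} (ha : 0 ≤ a) (hb : 0 ≤ b) (ht : t ∈ Icc (0:ℝ) 1) :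
    0 ≤ (1-t)*a + t*b :=
  add_nonneg (mul_nonneg (by linarith [ht.2]) ha) (mul_nonneg ht.1 hb)

lemma LpPowP_nonneg {p a b : ℝ} (hp : 1 ≤ p) (ha : 0 ≤ a) (hb : 0 ≤ b) :
    0 ≤ LpPowP p a b := by
  rw [LpPowP_eq_integral hp]
  exact intervalIntegral.integral_nonneg zero_le_one
    (fun t ht => Real.rpow_nonneg (base_nonneg ha hb ht) p)

lemma midpoint_le_LpPowP {p a b : ℝ} (hp : 1 ≤ p) (ha : 0 ≤ a) (hb : 0 ≤ b) :
    ((a+b)/2) ^ p ≤ LpPowP p a b := by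
  rw [LpPowP_eq_integral hp]
  set g : ℝ → ℝ := fun t => ((1-t)*a + t*b) ^ p with hg
  have hgc : Continuous g := cont_g p a b hp
  have hgc2 : Continuous fun t : ℝ => g (1 - t) :=
    hgc.comp (by continuity)
  have hflip : (∫ t in (0:ℝ)..1, g (1 - t)) = ∫ t in (0:ℝ)..1, g t := by
    rw [intervalIntegral.integral_comp_sub_left g 1]
    norm_num
  have hpt : ∀ t ∈ Icc (0:ℝ) 1, ((a+b)/2) ^ p ≤ (g t + g (1-t))/2 := by
    intro t ht
    have h1t : (1:ℝ) - t ∈ Icc (0:ℝ) 1 := ⟨by linarith [ht.2], by linarith [ht.1]⟩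
    have hu := base_nonneg ha hb ht
    have hv := base_nonneg ha hb h1t
    have hconv := (convexOn_rpow hp).2 (mem_Ici.mpr hu) (mem_Ici.mpr hv)
      (by norm_num : (0:ℝ) ≤ 1/2) (by norm_num : (0:ℝ) ≤ 1/2) (by norm_num)
    simp only [smul_eq_mul] at hconv
    have heq : (1:ℝ)/2 * ((1-t)*a + t*b) + 1/2 * ((1-(1-t))*a + (1-t)*b) = (a+b)/2 := by ring
    rw [heq] at hconv
    calc ((a+b)/2) ^ p ≤ 1/2 * g t + 1/2 * g (1-t) := hconv
      _ = (g t + g (1-t))/2 := by ring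
  have hint : ((a+b)/2) ^ p = ∫ t in (0:ℝ)..1, ((a+b)/2) ^ p := by simp
  rw [hint]
  have hle := intervalIntegral.integral_mono_on (μ := volume) (a := 0) (b := 1)
    zero_le_one (intervalIntegrable_const)
    (((hgc.add hgc2).div_const 2).intervalIntegrable 0 1 :
      IntervalIntegrable (fun t => (g t + g (1-t))/2) volume 0 1)
    hpt
  refine hle.trans (le_of_eq ?_)
  have hsplit : (∫ t in (0:ℝ)..1, (g t + g (1-t))/2)
      = ((∫ t in (0:ℝ)..1, g t) + ∫ t in (0:ℝ)..1, g (1-t))/2 := by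
    rw [intervalIntegral.integral_div, intervalIntegral.integral_add
      (hgc.intervalIntegrable 0 1)
      (hgc2.intervalIntegrable 0 1 :
        IntervalIntegrable (fun t => g (1-t)) volume 0 1)]
  show (∫ t in (0:ℝ)..1, (g t + g (1-t))/2) = ∫ t in (0:ℝ)..1, g t
  rw [hsplit, hflip]
  ring

lemma LpPowP_le_half {p a b : ℝ} (hp : 1 ≤ p) (ha : 0 ≤ a) (hb : 0 ≤ b) :
    LpPowP p a b ≤ (a ^ p + b ^ p)/2 := by
  rw [LpPowP_eq_integral hp]
  have hpt : ∀ t ∈ Icc (0:ℝ) 1, ((1-t)*a + t*b) ^ p ≤ (1-t)*a^p + t*b^p := by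
    intro t ht
    have hconv := (convexOn_rpow hp).2 (mem_Ici.mpr ha) (mem_Ici.mpr hb)
      (by linarith [ht.2] : (0:ℝ) ≤ 1 - t) ht.1 (by ring)
    simpa using hconv
  have hcont2 : Continuous fun t : ℝ => (1-t)*a^p + t*b^p := by continuity
  have hle := intervalIntegral.integral_mono_on (μ := volume) (a := 0) (b := 1)
    zero_le_one ((cont_g p a b hp).intervalIntegrable 0 1)
    (hcont2.intervalIntegrable 0 1) hpt
  refine hle.trans (le_of_eq ?_)
  have hc1 : Continuous fun t : ℝ => (1-t)*a^p := by continuity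
  have hc2 : Continuous fun t : ℝ => t*b^p := by continuity
  rw [intervalIntegral.integral_add (hc1.intervalIntegrable 0 1) (hc2.intervalIntegrable 0 1),
    intervalIntegral.integral_mul_const, intervalIntegral.integral_mul_const]
  have h1 : (∫ t in (0:ℝ)..1, (1 - t)) = 1/2 := by
    rw [intervalIntegral.integral_comp_sub_left (fun t : ℝ => t) 1]
    norm_num [integral_id]
  have h2 : (∫ t in (0:ℝ)..1, t) = 1/2 := by norm_num [integral_id]
  rw [h1, h2]; ring

lemma measurable_LpPowP (p : ℝ) : Measurable (fun q : ℝ × ℝ => LpPowP p q.1 q.2) := by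
  unfold LpPowP
  apply Measurable.ite (measurableSet_eq_fun measurable_fst measurable_snd)
  · fun_prop
  · fun_prop

lemma aux_mem {X : Type*} [MeasurableSpace X] {ν : Measure X} {q : ENNReal} {n : ℕ}
    (c : Fin n → ℝ) {f : Fin n → X → ℝ} (hf : ∀ j, MemLp (f j) q ν) :
    MemLp (fun x => ∑ j, c j * |f j x|) q ν := by
  apply memLp_finset_sum
  intro j _
  simpa [Real.norm_eq_abs] using ((hf j).norm.const_mul (c j))

lemma aux_int {X : Type*} [MeasurableSpace X] {ν : Measure X} {p : ℝ} (hp : 1 ≤ p) {n : ℕ}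
    (c : Fin n → ℝ) (hc : ∀ j, 0 ≤ c j) {f : Fin n → X → ℝ}
    (hf : ∀ j, MemLp (f j) (ENNReal.ofReal p) ν) :
    Integrable (fun x => (∑ j, c j * |f j x|) ^ p) ν := by
  have hp0 : (0:ℝ) ≤ p := by linarith
  have hq0 : (ENNReal.ofReal p) ≠ 0 := by
    simp only [ne_eq, ENNReal.ofReal_eq_zero, not_le]; linarith
  have h := (aux_mem c hf).integrable_norm_rpow hq0 ENNReal.ofReal_ne_top
  rw [ENNReal.toReal_ofReal hp0] at h
  refine h.congr (Filter.Eventually.of_forall fun x => ?_)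
  show ‖∑ j, c j * |f j x|‖ ^ p = (∑ j, c j * |f j x|) ^ p
  rw [Real.norm_eq_abs, abs_of_nonneg]
  exact Finset.sum_nonneg fun j _ => mul_nonneg (hc j) (abs_nonneg _)

theorem lp_norm_refinement_two_weights
    {X : Type*} [MeasurableSpace X] (ν : Measure X)
    (p : ℝ) (hp : 1 ≤ p)
    {m n : ℕ} (μ : Fin m → ℝ) (lam : Fin n → ℝ)
    (hμ0 : ∀ i, 0 ≤ μ i) (hμ1 : ∑ i, μ i = 1)
    (hlam0 : ∀ j, 0 ≤ lam j) (hlam1 : ∑ j, lam j = 1)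
    (ω₁ ω₂ : Fin m → Fin n → ℝ)
    (hω₁0 : ∀ i j, 0 ≤ ω₁ i j) (hω₁μ : ∀ j, ∑ i, ω₁ i j * μ i = 1)
    (hω₁lam : ∀ i, ∑ j, ω₁ i j * lam j = 1)
    (hω₂0 : ∀ i j, 0 ≤ ω₂ i j) (hω₂μ : ∀ j, ∑ i, ω₂ i j * μ i = 1)
    (hω₂lam : ∀ i, ∑ j, ω₂ i j * lam j = 1)
    (f : Fin n → X → ℝ) (hf : ∀ j, MemLp (f j) (ENNReal.ofReal p) ν) :
    (∫ x, |∑ j, lam j * f j x| ^ p ∂ν) ≤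
        ∑ i, μ i *
          ∫ x, |LpPowP p (∑ j, ω₁ i j * lam j * |f j x|) (∑ j, ω₂ i j * lam j * |f j x|)| ∂ν ∧
      (∑ i, μ i *
          ∫ x, |LpPowP p (∑ j, ω₁ i j * lam j * |f j x|) (∑ j, ω₂ i j * lam j * |f j x|)| ∂ν) ≤
        ∑ j, lam j * ∫ x, |f j x| ^ p ∂ν := by
  classical
  have hp0 : (0:ℝ) ≤ p := by linarith
  have hq0 : (ENNReal.ofReal p) ≠ 0 := by
    simp only [ne_eq, ENNReal.ofReal_eq_zero, not_le]; linarith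
  -- abbreviations
  set A : Fin m → X → ℝ := fun i x => ∑ j, ω₁ i j * lam j * |f j x| with hA
  set B : Fin m → X → ℝ := fun i x => ∑ j, ω₂ i j * lam j * |f j x| with hB
  have hA0 : ∀ i x, 0 ≤ A i x := fun i x =>
    Finset.sum_nonneg fun j _ => mul_nonneg (mul_nonneg (hω₁0 i j) (hlam0 j)) (abs_nonneg _)
  have hB0 : ∀ i x, 0 ≤ B i x := fun i x =>
    Finset.sum_nonneg fun j _ => mul_nonneg (mul_nonneg (hω₂0 i j) (hlam0 j)) (abs_nonneg _)
  -- drop the absolute value around LpPowP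
  have habs : ∀ i, (∫ x, |LpPowP p (A i x) (B i x)| ∂ν) = ∫ x, LpPowP p (A i x) (B i x) ∂ν :=
    fun i => integral_congr_ae (Filter.Eventually.of_forall fun x =>
      abs_of_nonneg (LpPowP_nonneg hp (hA0 i x) (hB0 i x)))
  -- integrability facts
  have hint_f : ∀ j, Integrable (fun x => |f j x| ^ p) ν := by
    intro j
    have h := (hf j).integrable_norm_rpow hq0 ENNReal.ofReal_ne_top
    rw [ENNReal.toReal_ofReal hp0] at h
    simpa [Real.norm_eq_abs] using h
  have hmemA : ∀ i, MemLp (A i) (ENNReal.ofReal p) ν :=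
    fun i => aux_mem (fun j => ω₁ i j * lam j) hf
  have hmemB : ∀ i, MemLp (B i) (ENNReal.ofReal p) ν :=
    fun i => aux_mem (fun j => ω₂ i j * lam j) hf
  have hintA : ∀ i, Integrable (fun x => A i x ^ p) ν :=
    fun i => aux_int hp (fun j => ω₁ i j * lam j)
      (fun j => mul_nonneg (hω₁0 i j) (hlam0 j)) hf
  have hintB : ∀ i, Integrable (fun x => B i x ^ p) ν :=
    fun i => aux_int hp (fun j => ω₂ i j * lam j)
      (fun j => mul_nonneg (hω₂0 i j) (hlam0 j)) hf
  have hmeas_h : ∀ i, AEStronglyMeasurable (fun x => LpPowP p (A i x) (B i x)) ν := by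
    intro i
    exact ((measurable_LpPowP p).comp_aemeasurable
      (((hmemA i).1.aemeasurable).prodMk ((hmemB i).1.aemeasurable))).aestronglyMeasurable
  have hint_h : ∀ i, Integrable (fun x => LpPowP p (A i x) (B i x)) ν := by
    intro i
    refine Integrable.mono' (((hintA i).add (hintB i)).div_const 2) (hmeas_h i)
      (Filter.Eventually.of_forall fun x => ?_)
    rw [Real.norm_eq_abs, abs_of_nonneg (LpPowP_nonneg hp (hA0 i x) (hB0 i x))]
    exact LpPowP_le_half hp (hA0 i x) (hB0 i x)
  -- key sum identity
  have hS : ∀ x : X, ∑ i, μ i * ((A i x + B i x)/2) = ∑ j, lam j * |f j x| := by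
    intro x
    have h1 : ∀ i, μ i * ((A i x + B i x)/2)
        = ∑ j, ((ω₁ i j * μ i + ω₂ i j * μ i)/2) * (lam j * |f j x|) := by
      intro i
      rw [hA, hB]
      simp only [← Finset.sum_add_distrib, Finset.sum_div, Finset.mul_sum]
      exact Finset.sum_congr rfl fun j _ => by ring
    calc ∑ i, μ i * ((A i x + B i x)/2)
        = ∑ i, ∑ j, ((ω₁ i j * μ i + ω₂ i j * μ i)/2) * (lam j * |f j x|) :=
          Finset.sum_congr rfl fun i _ => h1 i
      _ = ∑ j, ∑ i, ((ω₁ i j * μ i + ω₂ i j * μ i)/2) * (lam j * |f j x|) := Finset.sum_comm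
      _ = ∑ j, lam j * |f j x| := by
          refine Finset.sum_congr rfl fun j _ => ?_
          rw [← Finset.sum_mul, ← Finset.sum_div, Finset.sum_add_distrib, hω₁μ j, hω₂μ j]
          norm_num
  -- lower bound
  have low : (∫ x, |∑ j, lam j * f j x| ^ p ∂ν) ≤
      ∑ i, μ i * ∫ x, LpPowP p (A i x) (B i x) ∂ν := by
    have hswap : (∫ x, ∑ i, μ i * LpPowP p (A i x) (B i x) ∂ν)
        = ∑ i, μ i * ∫ x, LpPowP p (A i x) (B i x) ∂ν := by
      rw [integral_finset_sum univ (fun i _ => (hint_h i).const_mul (μ i))]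
      exact Finset.sum_congr rfl fun i _ => MeasureTheory.integral_const_mul _ _
    rw [← hswap]
    refine integral_mono_of_nonneg (Filter.Eventually.of_forall fun x => ?_)
      (integrable_finset_sum univ (fun i _ => (hint_h i).const_mul (μ i)))
      (Filter.Eventually.of_forall fun x => ?_)
    · exact Real.rpow_nonneg (abs_nonneg _) p
    · have step1 : |∑ j, lam j * f j x| ^ p ≤ (∑ j, lam j * |f j x|) ^ p := by
        refine Real.rpow_le_rpow (abs_nonneg _) ?_ hp0
        refine (Finset.abs_sum_le_sum_abs _ _).trans (le_of_eq ?_)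
        exact Finset.sum_congr rfl fun j _ => by
          rw [abs_mul, abs_of_nonneg (hlam0 j)]
      have step2 : (∑ j, lam j * |f j x|) ^ p ≤ ∑ i, μ i * ((A i x + B i x)/2) ^ p := by
        rw [← hS x]
        exact Real.rpow_arith_mean_le_arith_mean_rpow univ μ
          (fun i => (A i x + B i x)/2) (fun i _ => hμ0 i) hμ1
          (fun i _ => div_nonneg (add_nonneg (hA0 i x) (hB0 i x)) two_pos.le) hp
      have step3 : ∑ i, μ i * ((A i x + B i x)/2) ^ p
          ≤ ∑ i, μ i * LpPowP p (A i x) (B i x) :=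
        Finset.sum_le_sum fun i _ => mul_le_mul_of_nonneg_left
          (midpoint_le_LpPowP hp (hA0 i x) (hB0 i x)) (hμ0 i)
      exact (step1.trans step2).trans step3
  -- upper bound
  have hInt_nonneg : ∀ j, 0 ≤ ∫ x, |f j x| ^ p ∂ν :=
    fun j => integral_nonneg fun x => Real.rpow_nonneg (abs_nonneg _) p
  have per_i : ∀ i, (∫ x, LpPowP p (A i x) (B i x) ∂ν)
      ≤ ∑ j, ((ω₁ i j + ω₂ i j)/2) * lam j * ∫ x, |f j x| ^ p ∂ν := by
    intro i
    have hptw : ∀ x, LpPowP p (A i x) (B i x)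
        ≤ ∑ j, ((ω₁ i j + ω₂ i j)/2) * lam j * |f j x| ^ p := by
      intro x
      have jA : A i x ^ p ≤ ∑ j, ω₁ i j * lam j * |f j x| ^ p :=
        Real.rpow_arith_mean_le_arith_mean_rpow univ (fun j => ω₁ i j * lam j)
          (fun j => |f j x|) (fun j _ => mul_nonneg (hω₁0 i j) (hlam0 j)) (hω₁lam i)
          (fun j _ => abs_nonneg _) hp
      have jB : B i x ^ p ≤ ∑ j, ω₂ i j * lam j * |f j x| ^ p :=
        Real.rpow_arith_mean_le_arith_mean_rpow univ (fun j => ω₂ i j * lam j)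
          (fun j => |f j x|) (fun j _ => mul_nonneg (hω₂0 i j) (hlam0 j)) (hω₂lam i)
          (fun j _ => abs_nonneg _) hp
      refine (LpPowP_le_half hp (hA0 i x) (hB0 i x)).trans ?_
      calc (A i x ^ p + B i x ^ p)/2
          ≤ ((∑ j, ω₁ i j * lam j * |f j x| ^ p) + ∑ j, ω₂ i j * lam j * |f j x| ^ p)/2 := by
            linarith
        _ = ∑ j, ((ω₁ i j + ω₂ i j)/2) * lam j * |f j x| ^ p := by
            rw [← Finset.sum_add_distrib, Finset.sum_div]
            exact Finset.sum_congr rfl fun j _ => by ring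
    have hint_rhs : Integrable (fun x => ∑ j, ((ω₁ i j + ω₂ i j)/2) * lam j * |f j x| ^ p) ν :=
      integrable_finset_sum univ (fun j _ => (hint_f j).const_mul _)
    have := integral_mono_of_nonneg
      (Filter.Eventually.of_forall fun x => LpPowP_nonneg hp (hA0 i x) (hB0 i x))
      hint_rhs (Filter.Eventually.of_forall hptw)
    refine this.trans (le_of_eq ?_)
    rw [integral_finset_sum univ (fun j _ => (hint_f j).const_mul _)]
    exact Finset.sum_congr rfl fun j _ => MeasureTheory.integral_const_mul _ _
  have up : (∑ i, μ i * ∫ x, LpPowP p (A i x) (B i x) ∂ν)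
      ≤ ∑ j, lam j * ∫ x, |f j x| ^ p ∂ν := by
    have h1 : (∑ i, μ i * ∫ x, LpPowP p (A i x) (B i x) ∂ν)
        ≤ ∑ i, μ i * ∑ j, ((ω₁ i j + ω₂ i j)/2) * lam j * ∫ x, |f j x| ^ p ∂ν :=
      Finset.sum_le_sum fun i _ => mul_le_mul_of_nonneg_left (per_i i) (hμ0 i)
    refine h1.trans (le_of_eq ?_)
    calc ∑ i, μ i * ∑ j, ((ω₁ i j + ω₂ i j)/2) * lam j * ∫ x, |f j x| ^ p ∂ν
        = ∑ i, ∑ j, ((ω₁ i j * μ i + ω₂ i j * μ i)/2) * (lam j * ∫ x, |f j x| ^ p ∂ν) := by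
          refine Finset.sum_congr rfl fun i _ => ?_
          rw [Finset.mul_sum]
          exact Finset.sum_congr rfl fun j _ => by ring
      _ = ∑ j, ∑ i, ((ω₁ i j * μ i + ω₂ i j * μ i)/2) * (lam j * ∫ x, |f j x| ^ p ∂ν) :=
          Finset.sum_comm
      _ = ∑ j, lam j * ∫ x, |f j x| ^ p ∂ν := by
          refine Finset.sum_congr rfl fun j _ => ?_
          rw [← Finset.sum_mul, ← Finset.sum_div, Finset.sum_add_distrib, hω₁μ j, hω₂μ j]
          norm_num
  -- conclude
  simp only [hA, hB] at habs low up
  constructor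
  · refine low.trans (le_of_eq ?_)
    exact Finset.sum_congr rfl fun i _ => by rw [habs i]
  · refine (le_of_eq ?_).trans up
    exact Finset.sum_congr rfl fun i _ => by rw [habs i]
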